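/- A satisfaction system Λ = (L, 𝔐, ⊨) is eviction-compatible (i.e., FRsubs(Mod(B) \ M, Λ) ≠ ∅ for every finite B ⊆ L and every M ⊆ 𝔐) if and only if for every M ⊆ 𝔐 either (i) M ∈ FRsets(Λ), or (ii) M has an immediate predecessor in the poset (FRsets(Λ) ∪ {M}, ⊊), or (iii) there is no M' ∈ FRsets(Λ) with M ⊆ M'. -/
import Mathlib


variable {α β : Type*}

def ModelsOf (sat : β → Set α → Prop) (B : Set α) : Set β := {m | sat m B}

def FRsets (sat : β → Set α → Prop) : Set (Set β) :=
  {X | ∃ B : Set α, B.Finite ∧ ModelsOf sat B = X}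

def FRsubs (sat : β → Set α → Prop) (M : Set β) : Set (Set β) :=
  {X | X ∈ FRsets sat ∧ X ⊆ M ∧ ¬ ∃ Y ∈ FRsets sat, X ⊂ Y ∧ Y ⊆ M}

def FRsups (sat : β → Set α → Prop) (M : Set β) : Set (Set β) :=
  {X | X ∈ FRsets sat ∧ M ⊆ X ∧ ¬ ∃ Y ∈ FRsets sat, M ⊆ Y ∧ Y ⊂ X}

theorem stmt6 (sat : β → Set α → Prop) :
    (∀ (B : Set α) (M : Set β), B.Finite →
        (FRsubs sat (ModelsOf sat B \ M)).Nonempty) ↔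
      ∀ M : Set β,
        M ∈ FRsets sat ∨
        (∃ X ∈ FRsets sat ∪ {M}, X ⊂ M ∧
          ¬ ∃ Z ∈ FRsets sat ∪ {M}, X ⊂ Z ∧ Z ⊂ M) ∨
        ¬ ∃ M' ∈ FRsets sat, M ⊆ M' := by
  constructor
  · intro h M
    by_cases hM : M ∈ FRsets sat
    · exact Or.inl hM
    by_cases hup : ∃ M' ∈ FRsets sat, M ⊆ M'
    · obtain ⟨M', ⟨B, hB, hMod⟩, hsub⟩ := hup
      have key := h B (ModelsOf sat B \ M) hB
      have heq : ModelsOf sat B \ (ModelsOf sat B \ M) = M := by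
        refine Set.diff_diff_cancel_left ?_
        rw [hMod]; exact hsub
      rw [heq] at key
      obtain ⟨X, hXfr, hXsub, hXmax⟩ := key
      refine Or.inr (Or.inl ⟨X, Or.inl hXfr,
        hXsub.ssubset_of_ne (fun he => hM (he ▸ hXfr)), ?_⟩)
      rintro ⟨Z, hZ, hXZ, hZM⟩
      rcases hZ with hZfr | hZeq
      · exact hXmax ⟨Z, hZfr, hXZ, hZM.subset⟩
      · exact hZM.ne hZeq
    · exact Or.inr (Or.inr hup)
  · intro h B M hB
    set N := ModelsOf sat B \ M with hN
    by_cases hNfr : N ∈ FRsets sat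
    · exact ⟨N, hNfr, subset_rfl, fun ⟨Y, _, hY, hYN⟩ => hY.not_subset hYN⟩
    rcases h N with h1 | h2 | h3
    · exact absurd h1 hNfr
    · obtain ⟨X, hXmem, hXN, hXimm⟩ := h2
      have hXfr : X ∈ FRsets sat := by
        rcases hXmem with h' | h'
        · exact h'
        · exact absurd (Set.mem_singleton_iff.mp h') hXN.ne
      refine ⟨X, hXfr, hXN.subset, ?_⟩
      rintro ⟨Y, hYfr, hXY, hYN⟩
      rcases eq_or_ne Y N with rfl | hne
      · exact hNfr hYfr
      · exact hXimm ⟨Y, Or.inl hYfr, hXY, hYN.ssubset_of_ne hne⟩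
    · exact absurd ⟨ModelsOf sat B, ⟨B, hB, rfl⟩, Set.diff_subset⟩ h3
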